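/- Let T₀ be a rooted tree with root v₀ and let v_j ≠ v₀ be a vertex on a longest path starting at v₀. If T₀' is obtained from T₀ by adding a new pendant vertex w adjacent to v_j, then ν(T₀') < ν(T₀). -/

import Mathlib

open Matrix BigOperators
open scoped Classical

/-- Weighted Laplacian of a weight function. -/
noncomputable def wLap {V : Type*} [Fintype V] [DecidableEq V] (w : V → V → ℝ) : Matrix V V ℝ :=
  Matrix.diagonal (fun v => ∑ u, w v u) - Matrix.of w

/-- The `k`-th smallest eigenvalue of a real matrix (0 if not Hermitian / out of range). -/
noncomputable def kthEig {W : Type*} [Fintype W] [DecidableEq W] (A : Matrix W W ℝ) (k : ℕ) : ℝ :=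
  if hA : A.IsHermitian then
    if h : k < Fintype.card W then
      (let g : Fin (Fintype.card W) → ℝ := hA.eigenvalues ∘ (Fintype.equivFin W).symm
       (g ∘ Tuple.sort g) ⟨k, h⟩)
    else 0
  else 0

noncomputable def minEig {W : Type*} [Fintype W] [DecidableEq W] (A : Matrix W W ℝ) : ℝ := kthEig A 0

/-- algebraic connectivity of a simple graph -/
noncomputable def algConn {V : Type*} [Fintype V] [DecidableEq V] (G : SimpleGraph V) : ℝ :=
  kthEig (G.lapMatrix ℝ) 1

/-- Dirichlet matrix: weighted Laplacian restricted to an interior set `S`. -/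
noncomputable def dirichletMatrix {V : Type*} [Fintype V] [DecidableEq V]
    (w : V → V → ℝ) (S : Set V) : Matrix S S ℝ :=
  (wLap w).submatrix Subtype.val Subtype.val

noncomputable def degSeq {V : Type*} [Fintype V] [DecidableEq V] (G : SimpleGraph V) : Multiset ℕ :=
  Finset.univ.val.map (fun v => G.degree v)

/-- Edge weights of a rooted tree: every edge has weight 1 except the
boundary edge from the root `v₀` to the distinguished neighbor `x`,
which has weight `w₀`. -/
noncomputable def treeWeight {V : Type*} [Fintype V] [DecidableEq V]
    (T : SimpleGraph V) (v₀ x : V) (w₀ : ℝ) : V → V → ℝ :=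
  fun u v => if T.Adj u v then
    (if (u = v₀ ∧ v = x) ∨ (u = x ∧ v = v₀) then w₀ else 1) else 0

/-- First Dirichlet eigenvalue of a rooted tree (root = unique boundary vertex). -/
noncomputable def nuRooted {V : Type*} [Fintype V] [DecidableEq V]
    (T : SimpleGraph V) (v₀ x : V) (w₀ : ℝ) : ℝ :=
  minEig (dirichletMatrix (treeWeight T v₀ x w₀) ({v₀}ᶜ : Set V))

/-- A caterpillar: the non-pendant vertices can be arranged as a path. -/
noncomputable def IsCaterpillar {V : Type*} [Fintype V] [DecidableEq V]
    (T : SimpleGraph V) : Prop :=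
  ∃ P : List V, P.Nodup ∧ (∀ v, v ∈ P ↔ 1 < T.degree v) ∧ P.Chain' T.Adj

/-! ### Auxiliary lemmas -/

section Rayleigh
variable {W : Type*} [Fintype W] [DecidableEq W]

lemma minEig_le_eigenvalues (A : Matrix W W ℝ) (hA : A.IsHermitian) [Nonempty W] (i : W) :
    minEig A ≤ hA.eigenvalues i := by
  have hc : 0 < Fintype.card W := Fintype.card_pos
  rw [minEig, kthEig, dif_pos hA, dif_pos hc]
  set g : Fin (Fintype.card W) → ℝ := hA.eigenvalues ∘ (Fintype.equivFin W).symm with hg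
  have hmono : Monotone (g ∘ Tuple.sort g) := Tuple.monotone_sort g
  have h1 : hA.eigenvalues i = (g ∘ Tuple.sort g) ((Tuple.sort g)⁻¹ (Fintype.equivFin W i)) := by
    simp [hg]
  rw [h1]
  exact hmono (by exact Fin.mk_le_of_le_val (Nat.zero_le _))

lemma quadform_ge (A : Matrix W W ℝ) (hA : A.IsHermitian) (lam : ℝ)
    (hlam : ∀ i, lam ≤ hA.eigenvalues i) (x : W → ℝ) :
    lam * (x ⬝ᵥ x) ≤ x ⬝ᵥ (A *ᵥ x) := by
  set U : Matrix W W ℝ := (hA.eigenvectorUnitary : Matrix W W ℝ) with hUdef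
  have hU1 : U * star U = 1 := (Matrix.mem_unitaryGroup_iff).mp hA.eigenvectorUnitary.2
  set y : W → ℝ := star U *ᵥ x with hy
  have hxU : x ᵥ* U = y := by
    rw [hy, Matrix.star_eq_conjTranspose, Matrix.conjTranspose_eq_transpose_of_trivial,
      Matrix.mulVec_transpose]
  have h2 : x ⬝ᵥ x = y ⬝ᵥ y := by
    conv_lhs => rw [show x ⬝ᵥ x = x ⬝ᵥ ((1 : Matrix W W ℝ) *ᵥ x) by rw [Matrix.one_mulVec]]
    rw [← hU1, ← Matrix.mulVec_mulVec, Matrix.dotProduct_mulVec, hxU, hy]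
  have hAx : A *ᵥ x = U *ᵥ (diagonal (RCLike.ofReal ∘ hA.eigenvalues) *ᵥ y) := by
    conv_lhs => rw [hA.spectral_theorem, Unitary.conjStarAlgAut_apply]
    rw [← hUdef, ← Matrix.mulVec_mulVec, ← Matrix.mulVec_mulVec, ← hy]
  have h1 : x ⬝ᵥ (A *ᵥ x) = ∑ i, hA.eigenvalues i * (y i * y i) := by
    rw [hAx, Matrix.dotProduct_mulVec, hxU]
    simp only [dotProduct, Matrix.mulVec_diagonal]
    exact Finset.sum_congr rfl fun i _ => by simp [Function.comp, RCLike.ofReal_real_eq_id]; ring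
  rw [h1, h2, dotProduct, Finset.mul_sum]
  exact Finset.sum_le_sum fun i _ => mul_le_mul_of_nonneg_right (hlam i) (mul_self_nonneg _)

end Rayleigh

section Dirichlet
variable {V : Type*} [Fintype V] [DecidableEq V]

lemma dirichlet_isHermitian (w : V → V → ℝ) (hw : ∀ u v, w u v = w v u) (S : Set V) :
    (dirichletMatrix w S).IsHermitian := by
  have : (dirichletMatrix w S)ᴴ = dirichletMatrix w S := by
    ext i j
    simp only [Matrix.conjTranspose_apply, star_trivial, dirichletMatrix, wLap,
      Matrix.submatrix_apply, Matrix.sub_apply, Matrix.diagonal_apply, Matrix.of_apply]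
    by_cases h : (i : V) = (j : V)
    · simp [h, hw]
    · have h' : ¬ (j : V) = (i : V) := fun hc => h hc.symm
      simp [h, h', hw (i : V) (j : V)]
  exact this

lemma dirichlet_mulVec (w : V → V → ℝ) (v₀ : V) (f : ({v₀}ᶜ : Set V) → ℝ)
    (a : ({v₀}ᶜ : Set V)) :
    (dirichletMatrix w ({v₀}ᶜ : Set V) *ᵥ f) a
      = (∑ t, w a.1 t) * f a - ∑ b : ({v₀}ᶜ : Set V), w a.1 b.1 * f b := by
  simp only [dirichletMatrix, wLap, Matrix.mulVec, dotProduct, Matrix.submatrix_apply,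
    Matrix.sub_apply, Matrix.diagonal_apply, Matrix.of_apply, sub_mul]
  rw [Finset.sum_sub_distrib]
  congr 1
  rw [Finset.sum_eq_single a]
  · simp
  · intro b _ hb
    rw [if_neg (fun hc => hb (Subtype.ext hc.symm)), zero_mul]
  · intro h; exact absurd (Finset.mem_univ a) h

lemma treeWeight_symm (T : SimpleGraph V) (v₀ x : V) (w₀ : ℝ) (u v : V) :
    treeWeight T v₀ x w₀ u v = treeWeight T v₀ x w₀ v u := by
  unfold treeWeight
  by_cases h : T.Adj u v
  · rw [if_pos h, if_pos h.symm]
    by_cases h2 : (u = v₀ ∧ v = x) ∨ (u = x ∧ v = v₀)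
    · rw [if_pos h2, if_pos (by tauto)]
    · rw [if_neg h2, if_neg (by tauto)]
  · rw [if_neg h, if_neg (fun hc => h hc.symm)]

lemma treeWeight_nonneg (T : SimpleGraph V) (v₀ x : V) (w₀ : ℝ) (hw₀ : 1 ≤ w₀) (u v : V) :
    0 ≤ treeWeight T v₀ x w₀ u v := by
  unfold treeWeight
  split_ifs <;> linarith

end Dirichlet

section NewGraph
variable {V : Type*} [Fintype V] [DecidableEq V]

/-- The tree with one pendant vertex `none` attached at `vj`. -/
noncomputable abbrev pendTree (T : SimpleGraph V) (vj : V) : SimpleGraph (Option V) :=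
  SimpleGraph.fromEdgeSet
    ((Sym2.map (some : V → Option V) '' T.edgeSet) ∪ {s((none : Option V), some vj)})

lemma pendTree_adj_some_some (T : SimpleGraph V) (vj u v : V) :
    (pendTree T vj).Adj (some u) (some v) ↔ T.Adj u v := by
  rw [SimpleGraph.fromEdgeSet_adj]
  constructor
  · rintro ⟨hmem, hne⟩
    rcases hmem with ⟨e, he, hmap⟩ | hsing
    · have : e = s(u, v) := by
        apply Sym2.map.injective (Option.some_injective V)
        rw [hmap, Sym2.map_pair_eq]
      rw [this] at he
      exact he
    · exfalso
      simp only [Set.mem_singleton_iff, Sym2.eq_iff] at hsing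
      rcases hsing with ⟨h1, _⟩ | ⟨h1, _⟩ <;> simp_all
  · intro h
    refine ⟨Or.inl ⟨s(u, v), h, Sym2.map_pair_eq _ _ _⟩, ?_⟩
    simp only [ne_eq, Option.some.injEq]
    exact h.ne

lemma pendTree_adj_none (T : SimpleGraph V) (vj : V) (u : V) :
    (pendTree T vj).Adj none (some u) ↔ u = vj := by
  rw [SimpleGraph.fromEdgeSet_adj]
  constructor
  · rintro ⟨hmem, _⟩
    rcases hmem with ⟨e, _, hmap⟩ | hsing
    · exfalso
      induction e using Sym2.ind with
      | _ a b =>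
        rw [Sym2.map_pair_eq] at hmap
        rw [Sym2.eq_iff] at hmap
        rcases hmap with ⟨h1, _⟩ | ⟨_, h2⟩ <;> simp_all
    · simp only [Set.mem_singleton_iff, Sym2.eq_iff] at hsing
      rcases hsing with ⟨_, h2⟩ | ⟨h1, _⟩ <;> simp_all
  · rintro rfl
    exact ⟨Or.inr rfl, by simp⟩

lemma pendTree_weight_some_some (T : SimpleGraph V) (v₀ x vj : V) (w₀ : ℝ) (u v : V) :
    treeWeight (pendTree T vj) (some v₀) (some x) w₀ (some u) (some v)
      = treeWeight T v₀ x w₀ u v := by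
  unfold treeWeight
  rw [show ((pendTree T vj).Adj (some u) (some v)) = T.Adj u v from
    propext (pendTree_adj_some_some T vj u v)]
  by_cases h : T.Adj u v
  · rw [if_pos h, if_pos h]
    by_cases h2 : (u = v₀ ∧ v = x) ∨ (u = x ∧ v = v₀)
    · rw [if_pos (by simpa using h2), if_pos h2]
    · rw [if_neg (by simpa using h2), if_neg h2]
  · rw [if_neg h, if_neg h]

lemma pendTree_weight_none_some (T : SimpleGraph V) (v₀ x vj : V) (w₀ : ℝ) (u : V) :
    treeWeight (pendTree T vj) (some v₀) (some x) w₀ none (some u)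
      = if u = vj then 1 else 0 := by
  unfold treeWeight
  by_cases h : u = vj
  · rw [if_pos ((pendTree_adj_none T vj u).mpr h), if_pos h, if_neg (by simp)]
  · rw [if_neg (fun hc => h ((pendTree_adj_none T vj u).mp hc)), if_neg h]

lemma pendTree_weight_none_none (T : SimpleGraph V) (v₀ x vj : V) (w₀ : ℝ) :
    treeWeight (pendTree T vj) (some v₀) (some x) w₀ none none = 0 := by
  unfold treeWeight
  rw [if_neg (SimpleGraph.irrefl _)]

end NewGraph

section Sums
variable {V : Type*} [Fintype V] [DecidableEq V]

lemma sum_compl_split (v₀ : V) (h : V → ℝ) :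
    ∑ t : V, h t = h v₀ + ∑ t : ({v₀}ᶜ : Set V), h t.1 := by
  rw [← Finset.add_sum_erase Finset.univ h (Finset.mem_univ v₀)]
  congr 1
  exact Finset.sum_subtype _ (fun t => by simp [Finset.mem_erase]) h

lemma sum_option_split (h : Option V → ℝ) :
    ∑ t : Option V, h t = h none + ∑ t : V, h (some t) := by
  rw [univ_option, Finset.sum_insertNone]

end Sums

lemma pendTree_weight_some_none {V : Type*} [Fintype V] [DecidableEq V]
    (T : SimpleGraph V) (v₀ x vj : V) (w₀ : ℝ) (u : V) :
    treeWeight (pendTree T vj) (some v₀) (some x) w₀ (some u) none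
      = if u = vj then 1 else 0 := by
  rw [treeWeight_symm, pendTree_weight_none_some]

/-- perturbation P2: attaching a new pendant vertex to a vertex
`vj ≠ v₀` of a longest path starting at the root strictly decreases the first
Dirichlet eigenvalue.  The new vertex is modeled as `none : Option V`. -/
theorem dirichlet_perturbation_P2 {V : Type*} [Fintype V] [DecidableEq V]
    (T : SimpleGraph V) (hT : T.IsTree) (v₀ x : V) (hx : T.Adj v₀ x)
    (w₀ : ℝ) (hw₀ : 1 ≤ w₀)
    (t : V) (p : T.Walk v₀ t) (hp : p.IsPath)
    (hlongest : ∀ (u : V) (q : T.Walk v₀ u), q.IsPath → q.length ≤ p.length)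
    (vj : V) (hvj : vj ∈ p.support) (hvj₀ : vj ≠ v₀)
    (hposvec : ∃ f : ({v₀}ᶜ : Set V) → ℝ, (∀ a, 0 < f a) ∧
      (dirichletMatrix (treeWeight T v₀ x w₀) ({v₀}ᶜ : Set V)) *ᵥ f =
        nuRooted T v₀ x w₀ • f) :
    nuRooted
        (SimpleGraph.fromEdgeSet
          ((Sym2.map (some : V → Option V) '' T.edgeSet) ∪ {s((none : Option V), some vj)}))
        (some v₀) (some x) w₀
      < nuRooted T v₀ x w₀ := by
  classical
  set w : V → V → ℝ := treeWeight T v₀ x w₀ with hwdef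
  set ν : ℝ := nuRooted T v₀ x w₀ with hν
  obtain ⟨f, hfpos, heig⟩ := hposvec
  have hwsymm : ∀ u v, w u v = w v u := treeWeight_symm T v₀ x w₀
  have hwnn : ∀ u v, 0 ≤ w u v := treeWeight_nonneg T v₀ x w₀ hw₀
  have hxS : x ∈ ({v₀}ᶜ : Set V) := Set.mem_compl_singleton_iff.mpr hx.ne'
  have hvjS : vj ∈ ({v₀}ᶜ : Set V) := Set.mem_compl_singleton_iff.mpr hvj₀
  have hv₀S : v₀ ∉ ({v₀}ᶜ : Set V) := by simp
  -- eigen-equation pointwise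
  have hLf : ∀ a : ({v₀}ᶜ : Set V), (∑ t, w a.1 t) * f a - ∑ b : ({v₀}ᶜ : Set V), w a.1 b.1 * f b = ν * f a := by
    intro a
    have h1 := congrFun heig a
    rw [dirichlet_mulVec] at h1
    rw [h1]
    simp [Pi.smul_apply]
  -- ν is positive
  have hswap : ∑ u : ({v₀}ᶜ : Set V), (∑ t : ({v₀}ᶜ : Set V), w u.1 t.1) * f u = ∑ u : ({v₀}ᶜ : Set V), ∑ b : ({v₀}ᶜ : Set V), w u.1 b.1 * f b := by
    conv_rhs => rw [Finset.sum_comm]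
    refine Finset.sum_congr rfl fun u _ => ?_
    rw [Finset.sum_mul]
    exact Finset.sum_congr rfl fun b _ => by rw [hwsymm]
  have hsum1 : ν * (∑ u : ({v₀}ᶜ : Set V), f u) = ∑ u : ({v₀}ᶜ : Set V), w u.1 v₀ * f u := by
    rw [Finset.mul_sum]
    calc ∑ u : ({v₀}ᶜ : Set V), ν * f u
        = ∑ u : ({v₀}ᶜ : Set V), ((∑ t, w u.1 t) * f u - ∑ b : ({v₀}ᶜ : Set V), w u.1 b.1 * f b) :=
          Finset.sum_congr rfl fun u _ => (hLf u).symm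
      _ = ∑ u : ({v₀}ᶜ : Set V), ((w u.1 v₀ + ∑ t : ({v₀}ᶜ : Set V), w u.1 t.1) * f u - ∑ b : ({v₀}ᶜ : Set V), w u.1 b.1 * f b) := by
          refine Finset.sum_congr rfl fun u _ => ?_
          rw [← sum_compl_split v₀ (fun t => w u.1 t)]
      _ = ∑ u : ({v₀}ᶜ : Set V), w u.1 v₀ * f u
            + (∑ u : ({v₀}ᶜ : Set V), (∑ t : ({v₀}ᶜ : Set V), w u.1 t.1) * f u - ∑ u : ({v₀}ᶜ : Set V), ∑ b : ({v₀}ᶜ : Set V), w u.1 b.1 * f b) := by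
          simp only [add_mul]
          rw [Finset.sum_sub_distrib, Finset.sum_add_distrib]
          ring
      _ = ∑ u : ({v₀}ᶜ : Set V), w u.1 v₀ * f u := by rw [hswap]; ring
  have hwx : w x v₀ = w₀ := by
    rw [hwdef]
    unfold treeWeight
    rw [if_pos hx.symm, if_pos (Or.inr ⟨rfl, rfl⟩)]
  have hfx : 0 < f ⟨x, hxS⟩ := hfpos _
  have hge : w₀ * f ⟨x, hxS⟩ ≤ ∑ u : ({v₀}ᶜ : Set V), w u.1 v₀ * f u := by
    calc w₀ * f ⟨x, hxS⟩ = w x v₀ * f ⟨x, hxS⟩ := by rw [hwx]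
      _ ≤ ∑ u : ({v₀}ᶜ : Set V), w u.1 v₀ * f u :=
          Finset.single_le_sum (f := fun u : ({v₀}ᶜ : Set V) => w u.1 v₀ * f u)
            (fun u _ => mul_nonneg (hwnn _ _) (hfpos u).le) (Finset.mem_univ ⟨x, hxS⟩)
  have hfsum : 0 < ∑ u : ({v₀}ᶜ : Set V), f u :=
    Finset.sum_pos (fun u _ => hfpos u) ⟨⟨x, hxS⟩, Finset.mem_univ _⟩
  have hνpos : 0 < ν := by nlinarith [hfx, hfsum, hge, hsum1, hw₀]
  -- the new graph
  set w' : Option V → Option V → ℝ := treeWeight (pendTree T vj) (some v₀) (some x) w₀ with hw'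
  have hnoneS' : (none : Option V) ∈ ({some v₀}ᶜ : Set (Option V)) := by simp
  -- test vector
  set fvj : ℝ := f ⟨vj, hvjS⟩ with hfvj
  set F : V → ℝ := fun u => if h : u ∈ ({v₀}ᶜ : Set V) then f ⟨u, h⟩ else 0 with hF
  set G : Option V → ℝ := fun a => a.elim fvj F with hG
  set g : ({some v₀}ᶜ : Set (Option V)) → ℝ := fun b => G b.1 with hg
  have hFv₀ : F v₀ = 0 := by rw [hF]; exact dif_neg hv₀S
  have hFS : ∀ u : ({v₀}ᶜ : Set V), F u.1 = f u := by
    intro u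
    rw [hF]
    simp only [u.2, dif_pos]
  have hFvj : F vj = fvj := by rw [hFS ⟨vj, hvjS⟩]
  -- weight facts
  have hw'ss : ∀ u v : V, w' (some u) (some v) = w u v :=
    pendTree_weight_some_some T v₀ x vj w₀
  have hw'ns : ∀ u : V, w' none (some u) = if u = vj then 1 else 0 :=
    pendTree_weight_none_some T v₀ x vj w₀
  have hw'sn : ∀ u : V, w' (some u) none = if u = vj then 1 else 0 :=
    pendTree_weight_some_none T v₀ x vj w₀
  have hw'nn : w' none none = 0 := pendTree_weight_none_none T v₀ x vj w₀
  -- pointwise computation of the new mulVec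
  set H : Option V → ℝ := fun a => a.elim 0 (fun u => ν * F u) with hH
  have hkey : ∀ b : ({some v₀}ᶜ : Set (Option V)), (dirichletMatrix w' ({some v₀}ᶜ : Set (Option V)) *ᵥ g) b = H b.1 := by
    intro b
    rw [dirichlet_mulVec]
    have hsum2 : ∑ c : ({some v₀}ᶜ : Set (Option V)), w' b.1 c.1 * g c
        = w' b.1 none * fvj + ∑ t : V, w' b.1 (some t) * F t := by
      have := sum_compl_split (V := Option V) (some v₀) (fun a => w' b.1 a * G a)
      have h0 : G (some v₀) = 0 := by rw [hG]; exact hFv₀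
      rw [h0, mul_zero, zero_add] at this
      rw [← this, sum_option_split]
      rfl
    rw [hsum2]
    obtain ⟨a, hb⟩ := b
    match a with
    | none =>
      have hd : ∑ t : Option V, w' none t = 1 := by
        rw [sum_option_split, hw'nn]
        simp [hw'ns]
      simp only [hd, hw'nn, hH]
      rw [show (∑ t : V, w' none (some t) * F t) = F vj by simp [hw'ns]]
      simp only [hG, Option.elim]
      rw [hFvj]
      show 1 * fvj - (0 * fvj + fvj) = 0
      ring
    | some u =>
      have huS : u ∈ ({v₀}ᶜ : Set V) := by
        simp only [Set.mem_compl_singleton_iff] at hb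
        simp only [Set.mem_compl_singleton_iff]
        exact fun hc => hb (by rw [hc])
      have hd : ∑ t : Option V, w' (some u) t
          = (if u = vj then 1 else 0) + ∑ t : V, w u t := by
        rw [sum_option_split, hw'sn]
        congr 1
        exact Finset.sum_congr rfl fun t _ => hw'ss u t
      have hs2 : ∑ t : V, w' (some u) (some t) * F t = ∑ t : ({v₀}ᶜ : Set V), w u t.1 * f t := by
        have e1 : ∑ t : V, w' (some u) (some t) * F t = ∑ t : V, w u t * F t :=
          Finset.sum_congr rfl fun t _ => by rw [hw'ss]
        rw [e1, sum_compl_split v₀ (fun t => w u t * F t), hFv₀, mul_zero, zero_add]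
        exact Finset.sum_congr rfl fun t _ => by rw [hFS]
      rw [hd, hs2, hw'sn]
      show ((if u = vj then 1 else 0) + ∑ t : V, w u t) * F u -
          ((if u = vj then 1 else 0) * fvj + ∑ t : ({v₀}ᶜ : Set V), w u t.1 * f t) = ν * F u
      have hmain := hLf ⟨u, huS⟩
      simp only at hmain
      have hFu : F u = f ⟨u, huS⟩ := hFS ⟨u, huS⟩
      by_cases hu : u = vj
      · subst hu
        rw [if_pos rfl, hFvj] at *
        rw [hFu] at *
        nlinarith [hmain]
      · rw [if_neg hu]
        rw [hFu]
        rw [← hmain]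
        ring
  -- quadratic form value
  have hQ : g ⬝ᵥ (dirichletMatrix w' ({some v₀}ᶜ : Set (Option V)) *ᵥ g) = ν * (f ⬝ᵥ f) := by
    unfold dotProduct
    rw [Finset.sum_congr rfl (fun b _ => by rw [hkey b])]
    have := sum_compl_split (V := Option V) (some v₀) (fun a => G a * H a)
    have h0 : G (some v₀) * H (some v₀) = 0 := by
      simp only [hG, hH, Option.elim]
      rw [hFv₀]; ring
    rw [h0, zero_add] at this
    rw [show (∑ b : ({some v₀}ᶜ : Set (Option V)), g b * H b.1) = ∑ b : ({some v₀}ᶜ : Set (Option V)), G b.1 * H b.1 from rfl, ← this,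
      sum_option_split (fun a => G a * H a)]
    have h1 : G none * H none = 0 := by simp [hG, hH]
    rw [h1, zero_add]
    have h2 : ∑ t : V, G (some t) * H (some t) = ∑ t : V, F t * (ν * F t) := rfl
    rw [h2, sum_compl_split v₀ (fun t => F t * (ν * F t)), hFv₀]
    rw [Finset.sum_congr rfl (fun t (_ : t ∈ Finset.univ) => by rw [hFS t])]
    rw [Finset.mul_sum]
    ring_nf
  -- norm value
  have hgg : g ⬝ᵥ g = f ⬝ᵥ f + fvj * fvj := by
    unfold dotProduct
    have := sum_compl_split (V := Option V) (some v₀) (fun a => G a * G a)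
    have h0 : G (some v₀) * G (some v₀) = 0 := by
      simp only [hG, Option.elim]; rw [hFv₀]; ring
    rw [h0, zero_add] at this
    rw [show (∑ b : ({some v₀}ᶜ : Set (Option V)), g b * g b) = ∑ b : ({some v₀}ᶜ : Set (Option V)), G b.1 * G b.1 from rfl, ← this,
      sum_option_split (fun a => G a * G a)]
    have h1 : G none * G none = fvj * fvj := rfl
    have h2 : ∑ t : V, G (some t) * G (some t) = ∑ t : V, F t * F t := rfl
    rw [h1, h2, sum_compl_split v₀ (fun t => F t * F t), hFv₀]
    rw [Finset.sum_congr rfl (fun t (_ : t ∈ Finset.univ) => by rw [hFS t])]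
    ring
  -- Rayleigh bound
  have hherm' : (dirichletMatrix w' ({some v₀}ᶜ : Set (Option V))).IsHermitian :=
    dirichlet_isHermitian w' (treeWeight_symm _ _ _ _) ({some v₀}ᶜ : Set (Option V))
  haveI : Nonempty ({some v₀}ᶜ : Set (Option V)) := ⟨⟨none, hnoneS'⟩⟩
  have hray : minEig (dirichletMatrix w' ({some v₀}ᶜ : Set (Option V))) * (g ⬝ᵥ g) ≤ g ⬝ᵥ (dirichletMatrix w' ({some v₀}ᶜ : Set (Option V)) *ᵥ g) :=
    quadform_ge _ hherm' _ (fun i => minEig_le_eigenvalues _ hherm' i) g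
  have hffpos : 0 < f ⬝ᵥ f :=
    Finset.sum_pos (fun b _ => mul_pos (hfpos b) (hfpos b)) ⟨⟨x, hxS⟩, Finset.mem_univ _⟩
  have hfvjpos : 0 < fvj := hfpos _
  have hgoal : nuRooted (pendTree T vj) (some v₀) (some x) w₀
      = minEig (dirichletMatrix w' ({some v₀}ᶜ : Set (Option V))) := rfl
  show nuRooted (pendTree T vj) (some v₀) (some x) w₀ < ν
  rw [hgoal]
  have h3 : ν * (f ⬝ᵥ f) < ν * (g ⬝ᵥ g) := by
    rw [hgg]
    nlinarith [mul_pos hνpos (mul_pos hfvjpos hfvjpos)]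
  have h4 : minEig (dirichletMatrix w' ({some v₀}ᶜ : Set (Option V))) * (g ⬝ᵥ g) < ν * (g ⬝ᵥ g) := by
    rw [hQ] at hray
    exact lt_of_le_of_lt hray h3
  have hggpos : 0 < g ⬝ᵥ g := by rw [hgg]; nlinarith [hffpos, hfvjpos]
  exact lt_of_mul_lt_mul_right h4 hggpos.le
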